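/- For all integers N ≥ 1 and n ≥ 1, B_{N,n} = n! · ∑_{k=1}^{n} ∑_{i_1+⋯+i_k=n, i_1,…,i_k ≥ 1} (−N!)^k / ((N+i_1)! ⋯ (N+i_k)!), where the inner sum is over all compositions of n into k positive parts. -/

import Mathlib

/-- The power series ∑_{i≥0} (N!/(N+i)!) xⁱ over ℚ. -/
noncomputable def hgSeries (N : ℕ) : PowerSeries ℚ :=
  PowerSeries.mk fun i => (N.factorial : ℚ) / ((N + i).factorial : ℚ)

/-- The hypergeometric Bernoulli number `B_{N,n}`, defined so that
`∑ (B_{N,n}/n!) xⁿ` is the multiplicative inverse of `hgSeries N` in ℚ[[x]]. -/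
noncomputable def hB (N n : ℕ) : ℚ :=
  (n.factorial : ℚ) * PowerSeries.coeff (R := ℚ) n (hgSeries N)⁻¹

open PowerSeries Finset in
/-- Coefficient of a power of a power series via antidiagonal tuples. -/
lemma coeff_pow_tuple (k n : ℕ) (φ : PowerSeries ℚ) :
    PowerSeries.coeff (R := ℚ) n (φ ^ k) =
      ∑ l ∈ Finset.Nat.antidiagonalTuple k n, ∏ j, PowerSeries.coeff (R := ℚ) (l j) φ := by
  have h : (φ ^ k) = ∏ _j : Fin k, φ := by simp
  rw [h, PowerSeries.coeff_prod]
  refine Finset.sum_nbij' (fun l => ⇑l) (fun x => Finsupp.equivFunOnFinite.symm x) ?_ ?_ ?_ ?_ ?_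
  · intro l hl
    rw [Finset.mem_finsuppAntidiag] at hl
    rw [Finset.Nat.mem_antidiagonalTuple]
    exact hl.1
  · intro x hx
    rw [Finset.Nat.mem_antidiagonalTuple] at hx
    rw [Finset.mem_finsuppAntidiag]
    exact ⟨by simpa using hx, Finset.subset_univ _⟩
  · intro l _; simp
  · intro x _; ext j; simp
  · intro l _; rfl

open PowerSeries Finset in
theorem stmt1 (N n : ℕ) (hN : 1 ≤ N) (hn : 1 ≤ n) :
    hB N n = (n.factorial : ℚ) * ∑ k ∈ Finset.Icc 1 n,
      ∑ i ∈ (Finset.Nat.antidiagonalTuple k n).filter (fun i => ∀ j, 1 ≤ i j),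
        (-(N.factorial : ℚ)) ^ k / ∏ j, ((N + i j).factorial : ℚ) := by
  classical
  set f := hgSeries N with hf
  have hc : PowerSeries.constantCoeff (R := ℚ) f = 1 := by
    simp only [hf, hgSeries, ← PowerSeries.coeff_zero_eq_constantCoeff, PowerSeries.coeff_mk,
      Nat.add_zero]
    exact div_self (Nat.cast_ne_zero.mpr N.factorial_ne_zero)
  set g : PowerSeries ℚ := 1 - f with hgdef
  have hg0 : PowerSeries.constantCoeff (R := ℚ) g = 0 := by simp [hgdef, hc]
  have hcoeffg : ∀ i, PowerSeries.coeff (R := ℚ) i g =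
      if i = 0 then 0 else -((N.factorial : ℚ) / ((N + i).factorial : ℚ)) := by
    intro i
    rw [hgdef, map_sub, PowerSeries.coeff_one, hf, hgSeries, PowerSeries.coeff_mk]
    split
    · subst_vars
      rw [Nat.add_zero,
        div_self (show ((N.factorial : ℚ)) ≠ 0 from Nat.cast_ne_zero.mpr N.factorial_ne_zero)]
      ring
    · simp_all
  have hS : f * (∑ k ∈ range (n + 1), g ^ k) = 1 - g ^ (n + 1) := by
    have h1 : f = 1 - g := by rw [hgdef]; ring
    rw [h1, mul_comm, ← neg_sub g 1, mul_neg, geom_sum_mul, neg_sub]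
  have hinv : f⁻¹ * f = 1 := PowerSeries.inv_mul_cancel f (by rw [hc]; norm_num)
  have hkey : f⁻¹ = (∑ k ∈ range (n + 1), g ^ k) + f⁻¹ * g ^ (n + 1) := by
    calc f⁻¹ = f⁻¹ * (f * (∑ k ∈ range (n + 1), g ^ k) + g ^ (n + 1)) := by
          rw [hS]; ring
      _ = (f⁻¹ * f) * (∑ k ∈ range (n + 1), g ^ k) + f⁻¹ * g ^ (n + 1) := by ring
      _ = _ := by rw [hinv, one_mul]
  have hzero : PowerSeries.coeff (R := ℚ) n (f⁻¹ * g ^ (n + 1)) = 0 := by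
    have hXg : (PowerSeries.X : ℚ⟦X⟧) ∣ g := PowerSeries.X_dvd_iff.mpr hg0
    have : (PowerSeries.X : ℚ⟦X⟧) ^ (n + 1) ∣ f⁻¹ * g ^ (n + 1) :=
      Dvd.dvd.mul_left (pow_dvd_pow_of_dvd hXg (n + 1)) _
    exact (PowerSeries.X_pow_dvd_iff.mp this) n (by omega)
  have hco : PowerSeries.coeff (R := ℚ) n f⁻¹ = ∑ k ∈ range (n + 1), PowerSeries.coeff (R := ℚ) n (g ^ k) := by
    rw [hkey, map_add, hzero, add_zero, map_sum]
  have hsplit : range (n + 1) = insert 0 (Finset.Icc 1 n) := by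
    ext x; simp [Finset.mem_range, Finset.mem_Icc]; omega
  have hterm : ∀ k ∈ Finset.Icc 1 n, PowerSeries.coeff (R := ℚ) n (g ^ k) =
      ∑ i ∈ (Finset.Nat.antidiagonalTuple k n).filter (fun i => ∀ j, 1 ≤ i j),
        (-(N.factorial : ℚ)) ^ k / ∏ j, ((N + i j).factorial : ℚ) := by
    intro k hk
    rw [coeff_pow_tuple]
    rw [← Finset.sum_filter_of_ne (p := fun i => ∀ j, 1 ≤ i j)]
    · apply Finset.sum_congr rfl
      intro l hl
      rw [Finset.mem_filter] at hl
      have hpos : ∀ j, l j ≠ 0 := fun j => by have := hl.2 j; omega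
      have : ∀ j : Fin k, PowerSeries.coeff (R := ℚ) (l j) g =
          -(N.factorial : ℚ) / ((N + l j).factorial : ℚ) := by
        intro j; rw [hcoeffg, if_neg (hpos j)]; ring
      rw [Finset.prod_congr rfl (fun j _ => this j), Finset.prod_div_distrib,
        Finset.prod_const, Finset.card_univ, Fintype.card_fin]
    · intro l _ hne j
      by_contra hj
      push_neg at hj
      apply hne
      apply Finset.prod_eq_zero (Finset.mem_univ j)
      rw [hcoeffg, if_pos (by omega)]
  have hone : PowerSeries.coeff (R := ℚ) n (g ^ 0 : ℚ⟦X⟧) = 0 := by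
    rw [pow_zero, PowerSeries.coeff_one, if_neg (by omega)]
  rw [hB, hco, hsplit, Finset.sum_insert (by simp), hone, zero_add,
    Finset.sum_congr rfl hterm]
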